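/- Let ρ ∈ (−1,1) and u ∈ ℝ. Then ∫_{ℝ²} (x−u)⁺·(y−u)⁺ · f_ρ(x,y) dx dy − (φ(u) − u·Φ̄(u))² = (ρ + u²)·ℓ(u,u,ρ) − 2u·φ(u)·Φ̄(u(1−ρ)/√(1−ρ²)) + √(1−ρ²)·φ(u/√(1+ρ))² − (φ(u) − u·Φ̄(u))². In other words, if (X,Y) is standard bivariate normal with correlation ρ, the covariance of (X−u)⁺ and (Y−u)⁺ equals (ρ + u²)·ℓ(u,u,ρ) − 2u·φ(u)·Φ̄(u(1−ρ)/√(1−ρ²)) + √(1−ρ²)·φ(u/√(1+ρ))² − (φ(u) − u·Φ̄(u))². -/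

import Mathlib

open MeasureTheory

/-- Density of the standard normal distribution. -/
noncomputable def stdNormalPDF (x : ℝ) : ℝ :=
  (Real.sqrt (2 * Real.pi))⁻¹ * Real.exp (-x ^ 2 / 2)

/-- Survival function of the standard normal distribution. -/
noncomputable def stdNormalSurv (x : ℝ) : ℝ :=
  ∫ t in Set.Ioi x, stdNormalPDF t

/-- Density of the standard bivariate normal distribution with correlation `ρ`. -/
noncomputable def bvnPDF (ρ x y : ℝ) : ℝ :=
  (2 * Real.pi * Real.sqrt (1 - ρ ^ 2))⁻¹ *
    Real.exp (-(x ^ 2 - 2 * ρ * x * y + y ^ 2) / (2 * (1 - ρ ^ 2)))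

/-- Total probability of the truncated standard bivariate normal distribution. -/
noncomputable def ell (u v ρ : ℝ) : ℝ :=
  ∫ x in Set.Ioi u, ∫ y in Set.Ioi v, bvnPDF ρ x y

open Real Set Filter Topology




lemma pdf_pos (x : ℝ) : 0 < stdNormalPDF x := by
  unfold stdNormalPDF
  have : (0:ℝ) < 2 * Real.pi := by positivity
  positivity

lemma continuous_pdf : Continuous stdNormalPDF := by
  unfold stdNormalPDF; fun_prop

lemma hasDerivAt_pdf (x : ℝ) : HasDerivAt stdNormalPDF (-x * stdNormalPDF x) x := by
  have h1 : HasDerivAt (fun t : ℝ => -t ^ 2 / 2) (-x) x := by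
    have := ((hasDerivAt_pow 2 x).neg).div_const 2
    simpa using this.congr_deriv (by ring)
  have h2 := (h1.exp).const_mul (Real.sqrt (2 * Real.pi))⁻¹
  exact h2.congr_deriv (by unfold stdNormalPDF; ring)

lemma tendsto_pdf : Tendsto stdNormalPDF atTop (𝓝 0) := by
  unfold stdNormalPDF
  rw [show (0:ℝ) = (Real.sqrt (2 * Real.pi))⁻¹ * 0 by ring]
  apply Tendsto.const_mul
  apply Real.tendsto_exp_atBot.comp
  have : Tendsto (fun x : ℝ => x ^ 2 / 2) atTop atTop :=
    (tendsto_pow_atTop (two_ne_zero)).atTop_div_const (by norm_num)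
  have h2 : Tendsto (fun x : ℝ => -(x ^ 2 / 2)) atTop atBot := tendsto_neg_atBot_iff.mpr this
  exact h2.congr (fun x => by ring)


lemma integrable_abs_pow_exp (n : ℕ) {b : ℝ} (hb : 0 < b) :
    Integrable fun x : ℝ => |x| ^ n * Real.exp (-b * x ^ 2) := by
  have hbd : ∀ x : ℝ, ‖|x| ^ n * Real.exp (-b * x ^ 2)‖ ≤
      Real.exp ((n:ℝ)^2 / (2*b)) * Real.exp (-(b/2) * x ^ 2) := by
    intro x
    rw [Real.norm_eq_abs, abs_mul, abs_of_nonneg (by positivity), abs_of_nonneg (Real.exp_pos _).le]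
    have h1 : |x| ^ n ≤ Real.exp ((n:ℝ) * |x|) := by
      calc |x| ^ n ≤ (Real.exp |x|) ^ n := by
            apply pow_le_pow_left₀ (abs_nonneg x)
            linarith [Real.add_one_le_exp |x|]
          _ = Real.exp ((n:ℝ) * |x|) := by rw [← Real.exp_nat_mul]
    calc |x| ^ n * Real.exp (-b * x ^ 2) ≤ Real.exp ((n:ℝ) * |x|) * Real.exp (-b * x ^ 2) := by
          apply mul_le_mul_of_nonneg_right h1 (Real.exp_pos _).le
      _ = Real.exp ((n:ℝ) * |x| - b * x ^ 2) := by rw [← Real.exp_add]; ring_nf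
      _ ≤ Real.exp ((n:ℝ)^2 / (2*b)) * Real.exp (-(b/2) * x ^ 2) := by
          rw [← Real.exp_add]
          apply Real.exp_le_exp.mpr
          have hx : x ^ 2 = |x| ^ 2 := (sq_abs x).symm
          have key : 0 ≤ (b * |x| - (n:ℝ)) ^ 2 := sq_nonneg _
          rw [hx]
          have h2b : (0:ℝ) < 2*b := by positivity
          have hmain : 2*b*((n:ℝ)*|x| - b*|x|^2) ≤ 2*b*((n:ℝ)^2/(2*b) + -(b/2)*|x|^2) := by
            have expand : 2*b*((n:ℝ)^2/(2*b) + -(b/2)*|x|^2) = (n:ℝ)^2 - b^2*|x|^2 := by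
              field_simp; ring
            rw [expand]; nlinarith [key]
          exact le_of_mul_le_mul_left hmain h2b
  apply Integrable.mono' ((integrable_exp_neg_mul_sq (by positivity : (0:ℝ) < b/2)).const_mul
    (Real.exp ((n:ℝ)^2 / (2*b)))) ?_ (ae_of_all _ hbd)
  exact (Continuous.mul (continuous_abs.pow n) (by fun_prop)).aestronglyMeasurable


lemma bvn_nonneg (ρ x y : ℝ) : 0 ≤ bvnPDF ρ x y := by
  unfold bvnPDF
  have h0 : (0:ℝ) ≤ 2 * Real.pi * Real.sqrt (1 - ρ ^ 2) := by positivity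
  positivity

lemma bvn_symm (ρ x y : ℝ) : bvnPDF ρ x y = bvnPDF ρ y x := by
  unfold bvnPDF; ring_nf

lemma continuous_bvn (ρ : ℝ) : Continuous fun p : ℝ × ℝ => bvnPDF ρ p.1 p.2 := by
  unfold bvnPDF; fun_prop

lemma bvn_factor {ρ : ℝ} (h1 : 0 < 1 - ρ^2) (x y : ℝ) :
    bvnPDF ρ x y = stdNormalPDF x *
      (stdNormalPDF ((y - ρ*x)/Real.sqrt (1-ρ^2)) / Real.sqrt (1-ρ^2)) := by
  have hs : 0 < Real.sqrt (1-ρ^2) := Real.sqrt_pos.mpr h1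
  have hs2 : Real.sqrt (1-ρ^2) ^ 2 = 1-ρ^2 := Real.sq_sqrt h1.le
  have h2π : Real.sqrt (2*Real.pi) * Real.sqrt (2*Real.pi) = 2*Real.pi :=
    Real.mul_self_sqrt (by positivity)
  unfold bvnPDF stdNormalPDF
  rw [div_pow, hs2]
  have hexp : Real.exp (-(x^2 - 2*ρ*x*y + y^2)/(2*(1-ρ^2)))
      = Real.exp (-x^2/2) * Real.exp (-((y-ρ*x)^2/(1-ρ^2))/2) := by
    rw [← Real.exp_add]; congr 1; field_simp; ring
  rw [hexp]
  have hne : Real.sqrt (2*Real.pi) ≠ 0 := by positivity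
  field_simp
  have h2π' : Real.sqrt 2 * Real.sqrt Real.pi * (Real.sqrt 2 * Real.sqrt Real.pi)
      = 2 * Real.pi := by
    rw [Real.sqrt_mul (by norm_num : (0:ℝ) ≤ 2)] at h2π
    linarith [h2π]
  linear_combination Real.sq_sqrt (show (0:ℝ) ≤ 2*Real.pi by positivity)

lemma bvn_le {ρ : ℝ} (h1 : 0 < 1 - ρ^2) (x y : ℝ) :
    bvnPDF ρ x y ≤ (2*Real.pi*Real.sqrt (1-ρ^2))⁻¹ *
      (Real.exp (-(2*(1+|ρ|))⁻¹ * x^2) * Real.exp (-(2*(1+|ρ|))⁻¹ * y^2)) := by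
  unfold bvnPDF
  apply mul_le_mul_of_nonneg_left _ (by positivity)
  rw [← Real.exp_add]
  apply Real.exp_le_exp.mpr
  have ht2 : |ρ|^2 = ρ^2 := sq_abs ρ
  have ht0 : 0 ≤ |ρ| := abs_nonneg ρ
  have habs : ρ*x*y ≤ |ρ| * |x| * |y| := by
    calc ρ*x*y ≤ |ρ*x*y| := le_abs_self _
      _ = |ρ| * |x| * |y| := by rw [abs_mul, abs_mul]
  have h2xy : 2*(|x| * |y|) ≤ x^2 + y^2 := by
    nlinarith [sq_nonneg (|x|-|y|), sq_abs x, sq_abs y]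
  have hP : 2*ρ*x*y ≤ |ρ| * (x^2 + y^2) := by
    nlinarith [mul_le_mul_of_nonneg_left h2xy ht0]
  have key : (x^2 + y^2) * (2 * (1 + |ρ|))⁻¹ ≤ (x^2 - 2*ρ*x*y + y^2) / (2*(1-ρ^2)) := by
    rw [← div_eq_mul_inv, div_le_div_iff₀ (by positivity) (by positivity)]
    have hfac := mul_nonneg (by positivity : (0:ℝ) ≤ 1+|ρ|)
      (sub_nonneg.mpr hP)
    nlinarith [hfac, ht2]
  have : -(x^2 - 2*ρ*x*y + y^2) / (2*(1-ρ^2)) = -((x^2 - 2*ρ*x*y + y^2) / (2*(1-ρ^2))) := by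
    ring
  rw [this]
  have : -(2*(1+|ρ|))⁻¹ * x^2 + -(2*(1+|ρ|))⁻¹ * y^2 = -((x^2 + y^2) * (2 * (1 + |ρ|))⁻¹) := by ring
  rw [this]
  exact neg_le_neg key

lemma hasDerivAt_bvn_fst {ρ : ℝ} (h1 : 0 < 1 - ρ^2) (y x : ℝ) :
    HasDerivAt (fun x => bvnPDF ρ x y) (-((x - ρ*y)/(1-ρ^2)) * bvnPDF ρ x y) x := by
  have hpoly : HasDerivAt (fun x : ℝ => x^2 - 2*ρ*x*y + y^2) (2*x - 2*ρ*y) x := by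
    have h := (((hasDerivAt_pow 2 x).sub
      (((hasDerivAt_id x).const_mul (2*ρ)).mul_const y))).add_const (y^2)
    simpa using h.congr_deriv (by ring)
  have hq := (hpoly.neg).div_const (2*(1-ρ^2))
  have h := (hq.exp).const_mul ((2 * Real.pi * Real.sqrt (1 - ρ ^ 2))⁻¹)
  apply h.congr_deriv
  unfold bvnPDF
  simp only [Pi.neg_apply]
  field_simp

lemma hasDerivAt_bvn_snd {ρ : ℝ} (h1 : 0 < 1 - ρ^2) (x y : ℝ) :
    HasDerivAt (fun y => bvnPDF ρ x y) (-((y - ρ*x)/(1-ρ^2)) * bvnPDF ρ x y) y := by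
  have hpoly : HasDerivAt (fun y : ℝ => x^2 - 2*ρ*x*y + y^2) (2*y - 2*ρ*x) y := by
    have h := ((((hasDerivAt_id y).const_mul (2*ρ*x)).const_sub (x^2)).add
      (hasDerivAt_pow 2 y))
    exact h.congr_deriv (by norm_num <;> ring)
  have hq := (hpoly.neg).div_const (2*(1-ρ^2))
  have h := (hq.exp).const_mul ((2 * Real.pi * Real.sqrt (1 - ρ ^ 2))⁻¹)
  apply h.congr_deriv
  unfold bvnPDF
  simp only [Pi.neg_apply]
  field_simp

lemma tendsto_exp_neg_sq (δ : ℝ) (hδ : 0 < δ) :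
    Tendsto (fun x : ℝ => Real.exp (-δ * x^2)) atTop (𝓝 0) := by
  apply Real.tendsto_exp_atBot.comp
  have h : Tendsto (fun x : ℝ => δ * x ^ 2) atTop atTop :=
    (tendsto_pow_atTop two_ne_zero).const_mul_atTop hδ
  have h2 : Tendsto (fun x : ℝ => -(δ * x ^ 2)) atTop atBot := tendsto_neg_atBot_iff.mpr h
  exact h2.congr (fun x => by ring)

lemma tendsto_mul_exp_neg_sq (δ : ℝ) (hδ : 0 < δ) :
    Tendsto (fun x : ℝ => x * Real.exp (-δ * x^2)) atTop (𝓝 0) := by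
  have hup : Tendsto (fun x : ℝ => x * Real.exp (-x)) atTop (𝓝 0) := by
    simpa using tendsto_pow_mul_exp_neg_atTop_nhds_zero 1
  apply tendsto_of_tendsto_of_tendsto_of_le_of_le' tendsto_const_nhds hup
  · filter_upwards [eventually_ge_atTop (0:ℝ)] with x hx
    positivity
  · filter_upwards [eventually_ge_atTop (max 1 δ⁻¹)] with x hx
    have hx1 : (1:ℝ) ≤ x := le_trans (le_max_left _ _) hx
    have hxδ : δ⁻¹ ≤ x := le_trans (le_max_right _ _) hx
    have hδx : 1 ≤ δ * x := by
      rw [← mul_inv_cancel₀ (ne_of_gt hδ)]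
      exact mul_le_mul_of_nonneg_left hxδ hδ.le
    apply mul_le_mul_of_nonneg_left _ (by linarith)
    apply Real.exp_le_exp.mpr
    nlinarith

lemma tendsto_bvn_fst {ρ : ℝ} (h1 : 0 < 1 - ρ^2) (y : ℝ) :
    Tendsto (fun x => bvnPDF ρ x y) atTop (𝓝 0) := by
  set K := (2*Real.pi*Real.sqrt (1-ρ^2))⁻¹ with hK
  set δ := (2*(1+|ρ|))⁻¹ with hδd
  have hδ : 0 < δ := by positivity
  have hbd : Tendsto (fun x : ℝ => K * Real.exp (-δ*y^2) * Real.exp (-δ*x^2)) atTop (𝓝 0) := by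
    have := (tendsto_exp_neg_sq δ hδ).const_mul (K * Real.exp (-δ*y^2))
    simpa using this
  apply tendsto_of_tendsto_of_tendsto_of_le_of_le tendsto_const_nhds hbd
    (fun x => bvn_nonneg ρ x y)
  intro x
  calc bvnPDF ρ x y ≤ K * (Real.exp (-δ*x^2) * Real.exp (-δ*y^2)) := bvn_le h1 x y
    _ = K * Real.exp (-δ*y^2) * Real.exp (-δ*x^2) := by ring

lemma tendsto_linear_bvn_snd {ρ : ℝ} (h1 : 0 < 1 - ρ^2) (a b x : ℝ) :
    Tendsto (fun y => (a + b*y) * bvnPDF ρ x y) atTop (𝓝 0) := by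
  set K := (2*Real.pi*Real.sqrt (1-ρ^2))⁻¹ with hK
  set δ := (2*(1+|ρ|))⁻¹ with hδd
  have hδ : 0 < δ := by positivity
  have hK0 : 0 ≤ K := by positivity
  have hbvny : Tendsto (fun y => bvnPDF ρ x y) atTop (𝓝 0) := by
    have := tendsto_bvn_fst h1 x
    exact this.congr (fun y => (bvn_symm ρ x y).symm ▸ rfl)
  have hybvn : Tendsto (fun y => y * bvnPDF ρ x y) atTop (𝓝 0) := by
    have hbd : Tendsto (fun y : ℝ => K * Real.exp (-δ*x^2) * (y * Real.exp (-δ*y^2)))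
        atTop (𝓝 0) := by
      have := (tendsto_mul_exp_neg_sq δ hδ).const_mul (K * Real.exp (-δ*x^2))
      simpa using this
    apply tendsto_of_tendsto_of_tendsto_of_le_of_le' tendsto_const_nhds hbd
    · filter_upwards [eventually_ge_atTop (0:ℝ)] with y hy
      exact mul_nonneg hy (bvn_nonneg ρ x y)
    · filter_upwards [eventually_ge_atTop (0:ℝ)] with y hy
      calc y * bvnPDF ρ x y ≤ y * (K * (Real.exp (-δ*x^2) * Real.exp (-δ*y^2))) :=
            mul_le_mul_of_nonneg_left (bvn_le h1 x y) hy
        _ = K * Real.exp (-δ*x^2) * (y * Real.exp (-δ*y^2)) := by ring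
  have := (hbvny.const_mul a).add (hybvn.const_mul b)
  simp only [mul_zero, add_zero] at this
  exact this.congr (fun y => by ring)


lemma continuous_bvn_snd (ρ x : ℝ) : Continuous fun y => bvnPDF ρ x y := by
  unfold bvnPDF; fun_prop

lemma continuous_bvn_fst (ρ y : ℝ) : Continuous fun x => bvnPDF ρ x y := by
  unfold bvnPDF; fun_prop

lemma integrable_pow_bvn_snd {ρ : ℝ} (h1 : 0 < 1 - ρ^2) (x : ℝ) (n : ℕ) :
    Integrable fun y => y^n * bvnPDF ρ x y := by
  set K := (2*Real.pi*Real.sqrt (1-ρ^2))⁻¹ with hK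
  set δ := (2*(1+|ρ|))⁻¹ with hδd
  have hδ : 0 < δ := by positivity
  have hK0 : (0:ℝ) ≤ K := by positivity
  apply Integrable.mono' ((integrable_abs_pow_exp n hδ).const_mul (K * Real.exp (-δ*x^2)))
    ((continuous_pow n).mul (continuous_bvn_snd ρ x)).aestronglyMeasurable
  apply ae_of_all
  intro y
  simp only [Pi.mul_apply]
  rw [Real.norm_eq_abs, abs_mul, abs_pow, abs_of_nonneg (bvn_nonneg ρ x y)]
  calc |y|^n * bvnPDF ρ x y ≤ |y|^n * (K * (Real.exp (-δ*x^2) * Real.exp (-δ*y^2))) := by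
        apply mul_le_mul_of_nonneg_left (bvn_le h1 x y) (by positivity)
    _ = K * Real.exp (-δ*x^2) * (|y|^n * Real.exp (-δ*y^2)) := by ring

lemma integrable_pow_bvn_fst {ρ : ℝ} (h1 : 0 < 1 - ρ^2) (y : ℝ) (n : ℕ) :
    Integrable fun x => x^n * bvnPDF ρ x y := by
  have h := integrable_pow_bvn_snd h1 y n
  exact h.congr (Eventually.of_forall fun x => by simp only []; rw [bvn_symm])

lemma integrable_pow_bvn_prod {ρ : ℝ} (h1 : 0 < 1 - ρ^2) (i j : ℕ) :
    Integrable fun p : ℝ × ℝ => p.1^i * p.2^j * bvnPDF ρ p.1 p.2 := by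
  set K := (2*Real.pi*Real.sqrt (1-ρ^2))⁻¹ with hK
  set δ := (2*(1+|ρ|))⁻¹ with hδd
  have hδ : 0 < δ := by positivity
  have hK0 : (0:ℝ) ≤ K := by positivity
  have hg : Integrable (fun p : ℝ × ℝ =>
      (K * (|p.1|^i * Real.exp (-δ*p.1^2))) * (|p.2|^j * Real.exp (-δ*p.2^2))) volume := by
    rw [Measure.volume_eq_prod]
    exact ((integrable_abs_pow_exp i hδ).const_mul K).mul_prod (integrable_abs_pow_exp j hδ)
  apply Integrable.mono' hg
  · exact (((continuous_fst.pow i).mul (continuous_snd.pow j)).mul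
      (continuous_bvn ρ)).aestronglyMeasurable
  apply ae_of_all
  intro p
  rw [Real.norm_eq_abs, abs_mul, abs_mul, abs_pow, abs_pow,
    abs_of_nonneg (bvn_nonneg ρ p.1 p.2)]
  calc |p.1|^i * |p.2|^j * bvnPDF ρ p.1 p.2
      ≤ |p.1|^i * |p.2|^j * (K * (Real.exp (-δ*p.1^2) * Real.exp (-δ*p.2^2))) := by
        apply mul_le_mul_of_nonneg_left (bvn_le h1 p.1 p.2) (by positivity)
    _ = (K * (|p.1|^i * Real.exp (-δ*p.1^2))) * (|p.2|^j * Real.exp (-δ*p.2^2)) := by ring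

lemma shift_Ioi (g : ℝ → ℝ) (m a : ℝ) :
    ∫ x in Set.Ioi a, g (x - m) = ∫ x in Set.Ioi (a - m), g x := by
  have hmp : MeasurePreserving (fun x : ℝ => x - m) volume volume :=
    measurePreserving_sub_right volume m
  have hemb : MeasurableEmbedding (fun x : ℝ => x - m) :=
    (MeasurableEquiv.subRight m).measurableEmbedding
  have h := hmp.setIntegral_preimage_emb hemb g (Set.Ioi (a - m))
  have hpre : (fun x : ℝ => x - m) ⁻¹' Set.Ioi (a - m) = Set.Ioi a := by
    ext z; simp [sub_lt_sub_iff_right]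
  rw [hpre] at h
  exact h

lemma surv_integral {s : ℝ} (hs : 0 < s) (m a : ℝ) :
    ∫ y in Set.Ioi a, stdNormalPDF ((y - m)/s) / s = stdNormalSurv ((a - m)/s) := by
  have h1 : ∫ y in Set.Ioi a, stdNormalPDF ((y - m)/s) / s
      = ∫ t in Set.Ioi (a - m), stdNormalPDF (t/s) / s :=
    shift_Ioi (fun t => stdNormalPDF (t/s) / s) m a
  rw [h1]
  have h2 : ∀ t : ℝ, stdNormalPDF (t/s)/s = (fun z => stdNormalPDF z / s) (t * s⁻¹) := by
    intro t; rw [← div_eq_mul_inv]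
  simp_rw [h2]
  rw [integral_comp_mul_right_Ioi (fun z => stdNormalPDF z / s) (a - m) (inv_pos.mpr hs)]
  rw [inv_inv, smul_eq_mul, integral_div, ← div_eq_mul_inv]
  unfold stdNormalSurv
  field_simp

lemma tendsto_bvn_snd {ρ : ℝ} (h1 : 0 < 1 - ρ^2) (x : ℝ) :
    Tendsto (fun y => bvnPDF ρ x y) atTop (𝓝 0) :=
  (tendsto_bvn_fst h1 x).congr (fun y => by rw [bvn_symm])

lemma my_prod_eq (s t : Set ℝ) :
    (volume : Measure (ℝ × ℝ)).restrict (s ×ˢ t)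
      = ((volume : Measure ℝ).restrict s).prod ((volume : Measure ℝ).restrict t) := by
  rw [Measure.prod_restrict, ← Measure.volume_eq_prod]

lemma setIntegral_prod_left (F : ℝ × ℝ → ℝ) {s t : Set ℝ}
    (hF : IntegrableOn (fun p : ℝ × ℝ => F p) (s ×ˢ t)) :
    ∫ p in s ×ˢ t, F p = ∫ x in s, ∫ y in t, F (x, y) := by
  rw [my_prod_eq]
  exact integral_prod F (by rwa [IntegrableOn, my_prod_eq] at hF)

lemma setIntegral_prod_right (F : ℝ × ℝ → ℝ) {s t : Set ℝ}
    (hF : IntegrableOn (fun p : ℝ × ℝ => F p) (s ×ˢ t)) :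
    ∫ p in s ×ˢ t, F p = ∫ y in t, ∫ x in s, F (x, y) := by
  rw [my_prod_eq]
  exact integral_prod_symm F (by rwa [IntegrableOn, my_prod_eq] at hF)

lemma integral_bvn_slice {ρ u : ℝ} (h1 : 0 < 1 - ρ^2) :
    ∫ y in Set.Ioi u, bvnPDF ρ u y
      = stdNormalPDF u * stdNormalSurv ((u - ρ*u)/Real.sqrt (1-ρ^2)) := by
  have hs : 0 < Real.sqrt (1-ρ^2) := Real.sqrt_pos.mpr h1
  simp_rw [bvn_factor h1 u]
  rw [MeasureTheory.integral_const_mul]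
  rw [surv_integral hs (ρ*u) u]

lemma integral_linear_bvn_slice {ρ u : ℝ} (h1 : 0 < 1 - ρ^2) :
    ∫ y in Set.Ioi u, (y - ρ*u) * bvnPDF ρ u y = (1-ρ^2) * bvnPDF ρ u u := by
  have hd : ∀ y ∈ Set.Ici u, HasDerivAt (fun y => -(1-ρ^2) * bvnPDF ρ u y)
      ((y - ρ*u) * bvnPDF ρ u y) y := by
    intro y _
    have h := (hasDerivAt_bvn_snd h1 u y).const_mul (-(1-ρ^2))
    apply h.congr_deriv
    field_simp
  have hint : IntegrableOn (fun y => (y - ρ*u) * bvnPDF ρ u y) (Set.Ioi u) := by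
    have h := (integrable_pow_bvn_snd h1 u 1).sub
      ((integrable_pow_bvn_snd h1 u 0).const_mul (ρ*u))
    exact (h.congr (Eventually.of_forall fun y => by simp only [Pi.sub_apply]; ring)).integrableOn
  have htd : Tendsto (fun y => -(1-ρ^2) * bvnPDF ρ u y) atTop (𝓝 0) := by
    have h := (tendsto_bvn_snd h1 u).const_mul (-(1-ρ^2))
    simp only [mul_zero] at h
    exact h.congr (fun y => by ring)
  rw [integral_Ioi_of_hasDerivAt_of_tendsto' hd hint htd]
  ring

lemma g_line {ρ u : ℝ} (h1 : 0 < 1 - ρ^2) :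
    ∫ y in Set.Ioi u, (y - u*(1+ρ)) * bvnPDF ρ u y
      = (1-ρ^2) * bvnPDF ρ u u
        - u * (stdNormalPDF u * stdNormalSurv ((u - ρ*u)/Real.sqrt (1-ρ^2))) := by
  have hsplit : ∀ y : ℝ, (y - u*(1+ρ)) * bvnPDF ρ u y
      = (y - ρ*u) * bvnPDF ρ u y - u * bvnPDF ρ u y := fun y => by ring
  simp_rw [hsplit]
  have hintA : IntegrableOn (fun y => (y - ρ*u) * bvnPDF ρ u y) (Set.Ioi u) := by
    have h := (integrable_pow_bvn_snd h1 u 1).sub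
      ((integrable_pow_bvn_snd h1 u 0).const_mul (ρ*u))
    exact (h.congr (Eventually.of_forall fun y => by simp only [Pi.sub_apply]; ring)).integrableOn
  have hintB : IntegrableOn (fun y => u * bvnPDF ρ u y) (Set.Ioi u) := by
    have h := (integrable_pow_bvn_snd h1 u 0).const_mul u
    exact (h.congr (Eventually.of_forall fun y => by simp only [Pi.sub_apply]; ring)).integrableOn
  rw [integral_sub hintA hintB, MeasureTheory.integral_const_mul,
    integral_linear_bvn_slice h1, integral_bvn_slice h1]


/-- The covariance of `(X-u)⁺` and `(Y-u)⁺` for a standard bivariate normal pair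
`(X, Y)` with correlation `ρ ∈ (-1, 1)`. -/
theorem stmt_4 (ρ u : ℝ) (hρ₁ : -1 < ρ) (hρ₂ : ρ < 1) :
    (∫ p : ℝ × ℝ, max (p.1 - u) 0 * max (p.2 - u) 0 * bvnPDF ρ p.1 p.2)
        - (stdNormalPDF u - u * stdNormalSurv u) ^ 2
      = (ρ + u ^ 2) * ell u u ρ
        - 2 * u * stdNormalPDF u *
            stdNormalSurv (u * (1 - ρ) / Real.sqrt (1 - ρ ^ 2))
        + Real.sqrt (1 - ρ ^ 2) * stdNormalPDF (u / Real.sqrt (1 + ρ)) ^ 2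
        - (stdNormalPDF u - u * stdNormalSurv u) ^ 2 := by
  have h1 : 0 < 1 - ρ^2 := by nlinarith
  have hne : (1 - ρ^2) ≠ 0 := ne_of_gt h1
  have hs : 0 < Real.sqrt (1-ρ^2) := Real.sqrt_pos.mpr h1
  have hs2 : Real.sqrt (1-ρ^2) ^ 2 = 1-ρ^2 := Real.sq_sqrt h1.le
  have hSmeas : MeasurableSet (Set.Ioi u ×ˢ Set.Ioi u : Set (ℝ × ℝ)) :=
    measurableSet_Ioi.prod measurableSet_Ioi
  -- basic 2D integrabilities
  have b11 := integrable_pow_bvn_prod h1 1 1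
  have b10 := integrable_pow_bvn_prod h1 1 0
  have b01 := integrable_pow_bvn_prod h1 0 1
  have b00 := integrable_pow_bvn_prod h1 0 0
  have b02 := integrable_pow_bvn_prod h1 0 2
  have hbvn2 : Integrable (fun p : ℝ × ℝ => bvnPDF ρ p.1 p.2) := by
    refine b00.congr (Eventually.of_forall fun p => ?_)
    simp
  have hF1 : Integrable (fun p : ℝ × ℝ => (p.1 - u) * (p.2 - u) * bvnPDF ρ p.1 p.2) := by
    have h := ((b11.sub (b10.const_mul u)).sub (b01.const_mul u)).add (b00.const_mul (u^2))
    refine h.congr (Eventually.of_forall fun p => ?_)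
    simp only [Pi.add_apply, Pi.sub_apply]
    ring
  have hdg2 : Integrable (fun p : ℝ × ℝ =>
      (p.2 - u*(1+ρ)) * (-((p.1 - ρ*p.2)/(1-ρ^2)) * bvnPDF ρ p.1 p.2)) := by
    have h := (((b11.const_mul (-(1-ρ^2)⁻¹)).add (b02.const_mul (ρ*(1-ρ^2)⁻¹))).add
      (b10.const_mul (u*(1+ρ)*(1-ρ^2)⁻¹))).add
      (b01.const_mul (-(u*(1+ρ)*ρ*(1-ρ^2)⁻¹)))
    refine h.congr (Eventually.of_forall fun p => ?_)
    simp only [Pi.add_apply, Pi.sub_apply]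
    field_simp
    ring
  have hdh2 : Integrable (fun p : ℝ × ℝ => ρ * bvnPDF ρ p.1 p.2
      + (ρ*p.2 - ρ*u - u) * (-((p.2 - ρ*p.1)/(1-ρ^2)) * bvnPDF ρ p.1 p.2)) := by
    have h := (b00.const_mul ρ).add ((((b02.const_mul (-(ρ*(1-ρ^2)⁻¹))).add
      (b11.const_mul (ρ^2*(1-ρ^2)⁻¹))).add
      (b01.const_mul ((ρ*u+u)*(1-ρ^2)⁻¹))).add
      (b10.const_mul (-((ρ*u+u)*ρ*(1-ρ^2)⁻¹))))
    refine h.congr (Eventually.of_forall fun p => ?_)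
    simp only [Pi.add_apply, Pi.sub_apply]
    field_simp
    ring
  -- step 1: rewrite the integral as a set integral
  have hind : (fun p : ℝ × ℝ => max (p.1 - u) 0 * max (p.2 - u) 0 * bvnPDF ρ p.1 p.2)
      = (Set.Ioi u ×ˢ Set.Ioi u : Set (ℝ × ℝ)).indicator
        (fun p => (p.1 - u) * (p.2 - u) * bvnPDF ρ p.1 p.2) := by
    funext p
    rcases le_or_gt p.1 u with hx | hx
    · have h0 : max (p.1 - u) 0 = 0 := max_eq_right (by linarith)
      have hnm : p ∉ (Set.Ioi u ×ˢ Set.Ioi u : Set (ℝ × ℝ)) := fun hmem =>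
        absurd hmem.1 (by simpa using hx)
      rw [Set.indicator_of_notMem hnm, h0]
      ring
    · rcases le_or_gt p.2 u with hy | hy
      · have h0 : max (p.2 - u) 0 = 0 := max_eq_right (by linarith)
        have hnm : p ∉ (Set.Ioi u ×ˢ Set.Ioi u : Set (ℝ × ℝ)) := fun hmem =>
          absurd hmem.2 (by simpa using hy)
        rw [Set.indicator_of_notMem hnm, h0]
        ring
      · have hmem : p ∈ (Set.Ioi u ×ˢ Set.Ioi u : Set (ℝ × ℝ)) := ⟨hx, hy⟩
        rw [Set.indicator_of_mem hmem, max_eq_left (by linarith), max_eq_left (by linarith)]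
  have hstep1 : (∫ p : ℝ × ℝ, max (p.1 - u) 0 * max (p.2 - u) 0 * bvnPDF ρ p.1 p.2)
      = ∫ p in (Set.Ioi u ×ˢ Set.Ioi u : Set (ℝ × ℝ)),
          (p.1 - u) * (p.2 - u) * bvnPDF ρ p.1 p.2 := by
    rw [hind, integral_indicator hSmeas]
  -- pointwise identity
  have hpt : ∀ p : ℝ × ℝ, (p.1 - u) * (p.2 - u) * bvnPDF ρ p.1 p.2
      = (ρ + u^2) * bvnPDF ρ p.1 p.2
        - ((p.2 - u*(1+ρ)) * (-((p.1 - ρ*p.2)/(1-ρ^2)) * bvnPDF ρ p.1 p.2))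
        - (ρ * bvnPDF ρ p.1 p.2
            + (ρ*p.2 - ρ*u - u) * (-((p.2 - ρ*p.1)/(1-ρ^2)) * bvnPDF ρ p.1 p.2)) := by
    intro p
    field_simp
    ring
  -- ell
  have hell : ∫ p in (Set.Ioi u ×ˢ Set.Ioi u : Set (ℝ × ℝ)), bvnPDF ρ p.1 p.2
      = ell u u ρ := by
    rw [setIntegral_prod_left _ hbvn2.integrableOn]
    rfl
  -- g-side
  have hginner : ∀ y : ℝ, (∫ x in Set.Ioi u,
      (y - u*(1+ρ)) * (-((x - ρ*y)/(1-ρ^2)) * bvnPDF ρ x y))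
      = 0 - (y - u*(1+ρ)) * bvnPDF ρ u y := by
    intro y
    have hd : ∀ x ∈ Set.Ici u, HasDerivAt (fun x => (y - u*(1+ρ)) * bvnPDF ρ x y)
        ((y - u*(1+ρ)) * (-((x - ρ*y)/(1-ρ^2)) * bvnPDF ρ x y)) x := fun x _ =>
      (hasDerivAt_bvn_fst h1 y x).const_mul (y - u*(1+ρ))
    have hint : IntegrableOn (fun x =>
        (y - u*(1+ρ)) * (-((x - ρ*y)/(1-ρ^2)) * bvnPDF ρ x y)) (Set.Ioi u) := by
      have h := ((integrable_pow_bvn_fst h1 y 1).const_mul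
          (-((y - u*(1+ρ)) * (1-ρ^2)⁻¹))).add
        ((integrable_pow_bvn_fst h1 y 0).const_mul ((y - u*(1+ρ)) * (ρ*y) * (1-ρ^2)⁻¹))
      refine (h.congr (Eventually.of_forall fun x => ?_)).integrableOn
      simp only [Pi.add_apply]
      field_simp
      ring
    have htd : Tendsto (fun x => (y - u*(1+ρ)) * bvnPDF ρ x y) atTop (𝓝 0) := by
      have h := (tendsto_bvn_fst h1 y).const_mul (y - u*(1+ρ))
      simpa using h
    exact integral_Ioi_of_hasDerivAt_of_tendsto' hd hint htd
  have hgval : (∫ p in (Set.Ioi u ×ˢ Set.Ioi u : Set (ℝ × ℝ)),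
      (p.2 - u*(1+ρ)) * (-((p.1 - ρ*p.2)/(1-ρ^2)) * bvnPDF ρ p.1 p.2))
      = -((1-ρ^2) * bvnPDF ρ u u
          - u * (stdNormalPDF u * stdNormalSurv ((u - ρ*u)/Real.sqrt (1-ρ^2)))) := by
    rw [setIntegral_prod_right _ hdg2.integrableOn]
    simp only
    simp_rw [hginner]
    rw [integral_congr_ae (Eventually.of_forall (fun y =>
      (by ring : (0:ℝ) - (y - u*(1+ρ)) * bvnPDF ρ u y = -((y - u*(1+ρ)) * bvnPDF ρ u y))))]
    rw [integral_neg, g_line h1]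
  -- h-side
  have hhinner : ∀ x : ℝ, (∫ y in Set.Ioi u, (ρ * bvnPDF ρ x y
      + (ρ*y - ρ*u - u) * (-((y - ρ*x)/(1-ρ^2)) * bvnPDF ρ x y)))
      = 0 - (ρ*u - ρ*u - u) * bvnPDF ρ x u := by
    intro x
    have hd : ∀ y ∈ Set.Ici u, HasDerivAt (fun y => (ρ*y - ρ*u - u) * bvnPDF ρ x y)
        (ρ * bvnPDF ρ x y
          + (ρ*y - ρ*u - u) * (-((y - ρ*x)/(1-ρ^2)) * bvnPDF ρ x y)) y := by
      intro y _
      have hlin : HasDerivAt (fun y : ℝ => ρ*y - ρ*u - u) ρ y := by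
        simpa using (((hasDerivAt_id y).const_mul ρ).sub_const (ρ*u)).sub_const u
      exact hlin.mul (hasDerivAt_bvn_snd h1 x y)
    have hint : IntegrableOn (fun y => ρ * bvnPDF ρ x y
        + (ρ*y - ρ*u - u) * (-((y - ρ*x)/(1-ρ^2)) * bvnPDF ρ x y)) (Set.Ioi u) := by
      have h := (((integrable_pow_bvn_snd h1 x 2).const_mul (-(ρ*(1-ρ^2)⁻¹))).add
        ((integrable_pow_bvn_snd h1 x 1).const_mul ((ρ^2*x + ρ*u + u)*(1-ρ^2)⁻¹))).add
        ((integrable_pow_bvn_snd h1 x 0).const_mul (ρ - (ρ*u+u)*ρ*x*(1-ρ^2)⁻¹))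
      refine (h.congr (Eventually.of_forall fun y => ?_)).integrableOn
      simp only [Pi.add_apply]
      field_simp
      ring
    have htd : Tendsto (fun y => (ρ*y - ρ*u - u) * bvnPDF ρ x y) atTop (𝓝 0) :=
      (tendsto_linear_bvn_snd h1 (-(ρ*u) - u) ρ x).congr (fun y => by ring)
    exact integral_Ioi_of_hasDerivAt_of_tendsto' hd hint htd
  have hhval : (∫ p in (Set.Ioi u ×ˢ Set.Ioi u : Set (ℝ × ℝ)),
      (ρ * bvnPDF ρ p.1 p.2
        + (ρ*p.2 - ρ*u - u) * (-((p.2 - ρ*p.1)/(1-ρ^2)) * bvnPDF ρ p.1 p.2)))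
      = u * (stdNormalPDF u * stdNormalSurv ((u - ρ*u)/Real.sqrt (1-ρ^2))) := by
    rw [setIntegral_prod_left _ hdh2.integrableOn]
    simp only
    simp_rw [hhinner]
    rw [integral_congr_ae (Eventually.of_forall (fun x =>
      (by ring : (0:ℝ) - (ρ*u - ρ*u - u) * bvnPDF ρ x u = u * bvnPDF ρ x u)))]
    rw [MeasureTheory.integral_const_mul]
    congr 1
    rw [integral_congr_ae (Eventually.of_forall (fun x =>
      (by rw [bvn_symm] : bvnPDF ρ x u = bvnPDF ρ u x)))]
    exact integral_bvn_slice h1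
  -- combine the three pieces
  have hmain : (∫ p in (Set.Ioi u ×ˢ Set.Ioi u : Set (ℝ × ℝ)),
      (p.1 - u) * (p.2 - u) * bvnPDF ρ p.1 p.2)
      = (ρ + u^2) * ell u u ρ + (1-ρ^2) * bvnPDF ρ u u
        - 2 * u * (stdNormalPDF u * stdNormalSurv ((u - ρ*u)/Real.sqrt (1-ρ^2))) := by
    have hfg : Integrable (fun p : ℝ × ℝ => (ρ + u^2) * bvnPDF ρ p.1 p.2
        - (p.2 - u*(1+ρ)) * (-((p.1 - ρ*p.2)/(1-ρ^2)) * bvnPDF ρ p.1 p.2)) :=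
      ((hbvn2.const_mul (ρ + u^2)).sub hdg2).congr (Eventually.of_forall fun p => by
        simp only [Pi.sub_apply])
    rw [integral_congr_ae (Eventually.of_forall (fun p => hpt p))]
    rw [integral_sub hfg.integrableOn hdh2.integrableOn]
    rw [integral_sub ((hbvn2.const_mul (ρ + u^2)).integrableOn) hdg2.integrableOn]
    rw [MeasureTheory.integral_const_mul, hell, hgval, hhval]
    ring
  -- algebraic identification of the boundary term
  have h1ρ : (0:ℝ) < 1 + ρ := by linarith
  have halg : Real.sqrt (1-ρ^2) * stdNormalPDF (u / Real.sqrt (1+ρ)) ^ 2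
      = (1-ρ^2) * bvnPDF ρ u u := by
    rw [bvn_factor h1 u u]
    unfold stdNormalPDF
    have E1 : (u / Real.sqrt (1+ρ))^2 = u^2/(1+ρ) := by
      rw [div_pow, Real.sq_sqrt h1ρ.le]
    have E2 : ((u - ρ*u) / Real.sqrt (1-ρ^2))^2 = (u - ρ*u)^2/(1-ρ^2) := by
      rw [div_pow, hs2]
    rw [E1, E2]
    have hφφ : Real.exp (-(u^2/(1+ρ))/2) * Real.exp (-(u^2/(1+ρ))/2)
        = Real.exp (-u^2/2) * Real.exp (-((u - ρ*u)^2/(1-ρ^2))/2) := by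
      rw [← Real.exp_add, ← Real.exp_add]
      congr 1
      field_simp
      ring
    have hss : Real.sqrt (1-ρ^2) * Real.sqrt (1-ρ^2) = 1-ρ^2 := Real.mul_self_sqrt h1.le
    have hexpand : Real.sqrt (1-ρ^2) * ((Real.sqrt (2*Real.pi))⁻¹
          * Real.exp (-(u^2/(1+ρ))/2))^2
        = Real.sqrt (1-ρ^2) * (Real.sqrt (2*Real.pi))⁻¹ * (Real.sqrt (2*Real.pi))⁻¹
          * (Real.exp (-(u^2/(1+ρ))/2) * Real.exp (-(u^2/(1+ρ))/2)) := by ring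
    rw [hexpand, hφφ]
    have hsne : Real.sqrt (1-ρ^2) ≠ 0 := ne_of_gt hs
    rw [← hss]
    field_simp
    ring_nf
    rw [hs2]
    exact hs2
  have harg : (u - ρ*u)/Real.sqrt (1-ρ^2) = u*(1-ρ)/Real.sqrt (1-ρ^2) := by ring
  rw [← halg] at hmain
  rw [hstep1, hmain, harg]
  ring
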